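/- Let k, t1, t2 be integers with k > t1 > t2 ≥ 2, and let S be a (k; k−t1, k−t2)-SPID in a finite-dimensional vector space V over a field, with n = |S| ≥ 3, dim V ≥ n·t1 + (k−t1), and dim⟨S⟩ = k + (n−1)(t1−1) + 1. Then S contains no (k−t1)-sunflower of maximal dimension with at least three petals if and only if every ordering (π1, …, πn) of S for which (δ_2, …, δ_n) is non-increasing satisfies δ(S) = (k, t1, t1−1, …, t1−1). -/

import Mathlib

set_option linter.unusedSectionVars false
set_option maxHeartbeats 2000000


open Module

variable {F : Type*} [Field F] {V : Type*} [AddCommGroup V] [Module F V]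
  [FiniteDimensional F V]

/-- The subspace `⟨π_1, …, π_j⟩` (1-based), i.e. the span of the `π i` with `(i : ℕ) < j`. -/
def pspan {n : ℕ} (π : Fin n → Submodule F V) (j : ℕ) : Submodule F V :=
  ⨆ i : Fin n, ⨆ _ : (i : ℕ) < j, π i

/-- The 1-based difference sequence `δ_j = dim⟨π_1,…,π_j⟩ - dim⟨π_1,…,π_{j-1}⟩`. -/
noncomputable def delta {n : ℕ} (π : Fin n → Submodule F V) (j : ℕ) : ℕ :=
  finrank F ↥(pspan π j) - finrank F ↥(pspan π (j - 1))

/-- A `(k; ℓ_1, …, ℓ_v)`-SPID, where `L` is the set of prescribed intersection dimensions: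
a family of pairwise distinct `k`-dimensional subspaces, any two distinct members meeting
in a dimension belonging to `L`, and every value of `L` being attained. -/
def IsSPID {n : ℕ} (k : ℕ) (L : Set ℕ) (π : Fin n → Submodule F V) : Prop :=
  Function.Injective π ∧
  (∀ i, finrank F ↥(π i) = k) ∧
  (∀ i j, i ≠ j → finrank F ↥(π i ⊓ π j) ∈ L) ∧
  ∀ ℓ ∈ L, ∃ i j, i ≠ j ∧ finrank F ↥(π i ⊓ π j) = ℓ

/-- An `ℓ`-junta: all members pass through a common `ℓ`-dimensional subspace. -/
def IsJunta {n : ℕ} (ℓ : ℕ) (π : Fin n → Submodule F V) : Prop :=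
  ∃ C : Submodule F V, finrank F ↥C = ℓ ∧ ∀ i, C ≤ π i

/-- `S` contains an `ℓ`-sunflower of maximal dimension with `p` petals (all petals being
`k`-dimensional): `p` members of `S` pairwise meeting exactly in a common `ℓ`-dimensional
center and spanning a subspace of dimension `ℓ + p(k - ℓ)`. -/
def HasMaxSunflower (k ℓ p : ℕ) (S : Set (Submodule F V)) : Prop :=
  ∃ A : Finset (Submodule F V), ↑A ⊆ S ∧ A.card = p ∧
    ∃ C : Submodule F V, finrank F ↥C = ℓ ∧
      (∀ W ∈ A, ∀ W' ∈ A, W ≠ W' → W ⊓ W' = C) ∧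
      finrank F ↥(A.sup id) = ℓ + p * (k - ℓ)

lemma pspan_zero {n : ℕ} (π : Fin n → Submodule F V) : pspan π 0 = ⊥ := by
  simp [pspan]

lemma pspan_mono {n : ℕ} (π : Fin n → Submodule F V) : Monotone (pspan π) := by
  intro a b hab
  exact iSup_mono fun i => iSup_le fun h => le_iSup_of_le (lt_of_lt_of_le h hab) le_rfl

lemma pspan_succ {n : ℕ} (π : Fin n → Submodule F V) (j : ℕ) (hj : j < n) :
    pspan π (j + 1) = pspan π j ⊔ π ⟨j, hj⟩ := by
  apply le_antisymm
  · refine iSup_le fun i => iSup_le fun hi => ?_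
    rcases lt_or_eq_of_le (Nat.lt_succ_iff.mp hi) with h | h
    · exact le_sup_of_le_left (le_iSup_of_le i (le_iSup_of_le h le_rfl))
    · have : i = ⟨j, hj⟩ := Fin.ext h
      rw [this]; exact le_sup_right
  · refine sup_le ?_ ?_
    · exact iSup_mono fun i => iSup_le fun h => le_iSup_of_le (Nat.lt_succ_of_lt h) le_rfl
    · exact le_iSup_of_le ⟨j, hj⟩ (le_iSup_of_le (Nat.lt_succ_self j) le_rfl)

lemma pspan_of_le {n : ℕ} (π : Fin n → Submodule F V) (j : ℕ) (hj : n ≤ j) :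
    pspan π j = ⨆ i, π i := by
  apply le_antisymm
  · exact iSup_le fun i => iSup_le fun _ => le_iSup_of_le i le_rfl
  · exact iSup_mono fun i => le_iSup_of_le (lt_of_lt_of_le i.2 hj) le_rfl

lemma pspan_congr {n : ℕ} (ρ σ : Fin n → Submodule F V) (j : ℕ)
    (h : ∀ i : Fin n, (i : ℕ) < j → ∃ i' : Fin n, (i' : ℕ) < j ∧ σ i' = ρ i)
    (h' : ∀ i : Fin n, (i : ℕ) < j → ∃ i' : Fin n, (i' : ℕ) < j ∧ ρ i' = σ i) :
    pspan ρ j = pspan σ j := by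
  apply le_antisymm
  · refine iSup_le fun i => iSup_le fun hi => ?_
    obtain ⟨i', hi', he⟩ := h i hi
    exact le_iSup_of_le i' (le_iSup_of_le hi' he.ge)
  · refine iSup_le fun i => iSup_le fun hi => ?_
    obtain ⟨i', hi', he⟩ := h' i hi
    exact le_iSup_of_le i' (le_iSup_of_le hi' he.ge)

/-- additive version of the rank of `pspan` at a successor. -/
lemma finrank_pspan_succ {n : ℕ} (π : Fin n → Submodule F V) (j : ℕ) (hj : j < n) :
    finrank F ↥(pspan π (j + 1)) + finrank F ↥(π ⟨j, hj⟩ ⊓ pspan π j)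
      = finrank F ↥(pspan π j) + finrank F ↥(π ⟨j, hj⟩) := by
  rw [pspan_succ π j hj, inf_comm]
  exact Submodule.finrank_sup_add_finrank_inf_eq _ _

lemma finrank_pspan_succ_delta {n : ℕ} (π : Fin n → Submodule F V) (j : ℕ) :
    finrank F ↥(pspan π (j + 1)) = finrank F ↥(pspan π j) + delta π (j + 1) := by
  have h : finrank F ↥(pspan π j) ≤ finrank F ↥(pspan π (j + 1)) :=
    Submodule.finrank_mono (pspan_mono π (by omega))
  have e : delta π (j + 1) = finrank F ↥(pspan π (j+1)) - finrank F ↥(pspan π j) := rfl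
  omega

lemma delta_succ_eq {n : ℕ} (π : Fin n → Submodule F V) (j : ℕ) (hj : j < n) :
    delta π (j + 1) + finrank F ↥(π ⟨j, hj⟩ ⊓ pspan π j) = finrank F ↥(π ⟨j, hj⟩) := by
  have h1 := finrank_pspan_succ π j hj
  have h2 := finrank_pspan_succ_delta π j
  omega

lemma sum_delta {n : ℕ} (π : Fin n → Submodule F V) (m : ℕ) :
    ∑ j ∈ Finset.Icc 1 m, delta π j = finrank F ↥(pspan π m) := by
  induction m with
  | zero => rw [pspan_zero]; simp
  | succ m ih =>
    rw [Finset.sum_Icc_succ_top (by omega), ih, ← finrank_pspan_succ_delta]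

lemma range_to_perm {n : ℕ} {π ρ : Fin n → Submodule F V} (hπ : Function.Injective π)
    (hρ : Function.Injective ρ) (h : Set.range ρ = Set.range π) :
    ∃ σ : Fin n → Fin n, Function.Bijective σ ∧ ∀ i, ρ i = π (σ i) := by
  have hmem : ∀ i, ρ i ∈ Set.range π := fun i => h ▸ Set.mem_range_self i
  choose σ hσ using hmem
  have hinj : Function.Injective σ := by
    intro i j hij
    apply hρ; rw [← hσ i, ← hσ j, hij]
  exact ⟨σ, Finite.injective_iff_bijective.mp hinj, fun i => (hσ i).symm⟩

lemma iSup_eq_of_range_eq {n : ℕ} {π ρ : Fin n → Submodule F V}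
    (h : Set.range ρ = Set.range π) : (⨆ i, ρ i) = ⨆ i, π i := by
  rw [← sSup_range, ← sSup_range, h]

/-- `δ_{j+1} ≤ t1` for `j ≥ 1`. -/
lemma delta_le_t1 {n k t1 t2 : ℕ} (h3 : t1 < k) (ρ : Fin n → Submodule F V)
    (hdim : ∀ i, finrank F ↥(ρ i) = k)
    (hpair : ∀ i j, i ≠ j → finrank F ↥(ρ i ⊓ ρ j) ∈ ({k - t1, k - t2} : Set ℕ))
    (ht21 : t2 < t1) (j : ℕ) (hj1 : 1 ≤ j) (hjn : j < n) :
    delta ρ (j + 1) ≤ t1 := by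
  have h0n : 0 < n := by omega
  have hne : (⟨j, hjn⟩ : Fin n) ≠ ⟨0, h0n⟩ := by
    simp [Fin.ext_iff]; omega
  have hS2 := delta_succ_eq ρ j hjn
  rw [hdim ⟨j, hjn⟩] at hS2
  have hle : ρ (⟨0, h0n⟩ : Fin n) ≤ pspan ρ j :=
    le_iSup_of_le ⟨0, h0n⟩ (le_iSup_of_le (by show 0 < j; omega) le_rfl)
  have hmono : finrank F ↥(ρ ⟨j, hjn⟩ ⊓ ρ ⟨0, h0n⟩) ≤ finrank F ↥(ρ ⟨j, hjn⟩ ⊓ pspan ρ j) :=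
    Submodule.finrank_mono (inf_le_inf_left _ hle)
  have hmem := hpair ⟨j, hjn⟩ ⟨0, h0n⟩ hne
  simp only [Set.mem_insert_iff, Set.mem_singleton_iff] at hmem
  rcases hmem with hm | hm <;> omega

lemma pspan_one {n : ℕ} (ρ : Fin n → Submodule F V) (h0 : 0 < n) :
    pspan ρ 1 = ρ ⟨0, h0⟩ := by
  rw [show (1 : ℕ) = 0 + 1 from rfl, pspan_succ ρ 0 h0, pspan_zero, bot_sup_eq]

lemma pspan_two {n : ℕ} (ρ : Fin n → Submodule F V) (h : 2 ≤ n) :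
    pspan ρ 2 = ρ ⟨0, by omega⟩ ⊔ ρ ⟨1, by omega⟩ := by
  have h1 := pspan_succ ρ 1 (by omega : 1 < n)
  norm_num at h1
  rw [h1, pspan_one ρ (by omega)]

lemma pspan_three {n : ℕ} (ρ : Fin n → Submodule F V) (h : 3 ≤ n) :
    pspan ρ 3 = ρ ⟨0, by omega⟩ ⊔ ρ ⟨1, by omega⟩ ⊔ ρ ⟨2, by omega⟩ := by
  have h1 := pspan_succ ρ 2 (by omega : 2 < n)
  norm_num at h1
  rw [h1, pspan_two ρ (by omega)]

lemma delta_one {n k : ℕ} (ρ : Fin n → Submodule F V) (h0 : 0 < n)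
    (hdim : finrank F ↥(ρ ⟨0, h0⟩) = k) : delta ρ 1 = k := by
  have : delta ρ (0 + 1) = finrank F ↥(pspan ρ 1) - finrank F ↥(pspan ρ 0) := rfl
  rw [pspan_one ρ h0, pspan_zero] at this
  simpa [hdim] using this

lemma sunflower_of_deltas {n k t1 t2 : ℕ} (h2 : t2 < t1) (h3 : t1 < k) (hn : 3 ≤ n)
    (ρ : Fin n → Submodule F V) (hinj : Function.Injective ρ)
    (hdim : ∀ i, finrank F ↥(ρ i) = k)
    (hpair : ∀ i j, i ≠ j → finrank F ↥(ρ i ⊓ ρ j) ∈ ({k - t1, k - t2} : Set ℕ))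
    (hδ2 : delta ρ 2 = t1) (hδ3 : delta ρ 3 = t1) :
    HasMaxSunflower k (k - t1) 3 (Set.range ρ) := by
  classical
  have h0 : (0 : ℕ) < n := by omega
  have h1 : (1 : ℕ) < n := by omega
  have h2n : (2 : ℕ) < n := by omega
  have hne01 : (⟨0, h0⟩ : Fin n) ≠ ⟨1, h1⟩ := by simp [Fin.ext_iff]
  have hne02 : (⟨0, h0⟩ : Fin n) ≠ ⟨2, h2n⟩ := by simp [Fin.ext_iff]
  have hne12 : (⟨1, h1⟩ : Fin n) ≠ ⟨2, h2n⟩ := by simp [Fin.ext_iff]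
  -- finrank (ρ 1 ⊓ ρ 0) = k - t1
  have hS1 := delta_succ_eq ρ 1 h1
  rw [hdim, pspan_one ρ h0] at hS1
  rw [(rfl : delta ρ (1 + 1) = delta ρ 2), hδ2] at hS1
  have hm10 := hpair ⟨1, h1⟩ ⟨0, h0⟩ (Ne.symm hne01)
  simp only [Set.mem_insert_iff, Set.mem_singleton_iff] at hm10
  have hC : finrank F ↥(ρ ⟨1, h1⟩ ⊓ ρ ⟨0, h0⟩) = k - t1 := by
    rcases hm10 with hm | hm <;> omega
  -- finrank (ρ 2 ⊓ pspan ρ 2) = k - t1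
  have hS2 := delta_succ_eq ρ 2 h2n
  rw [hdim] at hS2
  rw [(rfl : delta ρ (2 + 1) = delta ρ 3), hδ3] at hS2
  have hD : finrank F ↥(ρ ⟨2, h2n⟩ ⊓ pspan ρ 2) = k - t1 := by omega
  have hle0 : ρ ⟨0, h0⟩ ≤ pspan ρ 2 := le_iSup_of_le ⟨0, h0⟩ (le_iSup_of_le (by norm_num) le_rfl)
  have hle1 : ρ ⟨1, h1⟩ ≤ pspan ρ 2 := le_iSup_of_le ⟨1, h1⟩ (le_iSup_of_le (by norm_num) le_rfl)
  have hge20 : k - t1 ≤ finrank F ↥(ρ ⟨2, h2n⟩ ⊓ ρ ⟨0, h0⟩) := by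
    have := hpair ⟨2, h2n⟩ ⟨0, h0⟩ (Ne.symm hne02)
    simp only [Set.mem_insert_iff, Set.mem_singleton_iff] at this
    rcases this with hm | hm <;> omega
  have hge21 : k - t1 ≤ finrank F ↥(ρ ⟨2, h2n⟩ ⊓ ρ ⟨1, h1⟩) := by
    have := hpair ⟨2, h2n⟩ ⟨1, h1⟩ (Ne.symm hne12)
    simp only [Set.mem_insert_iff, Set.mem_singleton_iff] at this
    rcases this with hm | hm <;> omega
  have hD0 : ρ ⟨2, h2n⟩ ⊓ ρ ⟨0, h0⟩ = ρ ⟨2, h2n⟩ ⊓ pspan ρ 2 :=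
    Submodule.eq_of_le_of_finrank_le (inf_le_inf_left _ hle0) (by omega)
  have hD1 : ρ ⟨2, h2n⟩ ⊓ ρ ⟨1, h1⟩ = ρ ⟨2, h2n⟩ ⊓ pspan ρ 2 :=
    Submodule.eq_of_le_of_finrank_le (inf_le_inf_left _ hle1) (by omega)
  have hDC : ρ ⟨2, h2n⟩ ⊓ pspan ρ 2 = ρ ⟨1, h1⟩ ⊓ ρ ⟨0, h0⟩ := by
    refine Submodule.eq_of_le_of_finrank_le (le_inf ?_ ?_) (by omega)
    · rw [← hD1]; exact inf_le_right
    · rw [← hD0]; exact inf_le_right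
  have e20 : ρ ⟨2, h2n⟩ ⊓ ρ ⟨0, h0⟩ = ρ ⟨1, h1⟩ ⊓ ρ ⟨0, h0⟩ := hD0.trans hDC
  have e21 : ρ ⟨2, h2n⟩ ⊓ ρ ⟨1, h1⟩ = ρ ⟨1, h1⟩ ⊓ ρ ⟨0, h0⟩ := hD1.trans hDC
  have hne01' : ρ ⟨0, h0⟩ ≠ ρ ⟨1, h1⟩ := fun h => hne01 (hinj h)
  have hne02' : ρ ⟨0, h0⟩ ≠ ρ ⟨2, h2n⟩ := fun h => hne02 (hinj h)
  have hne12' : ρ ⟨1, h1⟩ ≠ ρ ⟨2, h2n⟩ := fun h => hne12 (hinj h)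
  refine ⟨{ρ ⟨0, h0⟩, ρ ⟨1, h1⟩, ρ ⟨2, h2n⟩}, ?_, ?_, ρ ⟨1, h1⟩ ⊓ ρ ⟨0, h0⟩, hC, ?_, ?_⟩
  · intro x hx
    simp only [Finset.coe_insert, Set.mem_insert_iff, Finset.coe_singleton,
      Set.mem_singleton_iff] at hx
    rcases hx with h | h | h <;> exact h ▸ Set.mem_range_self _
  · rw [Finset.card_insert_of_notMem (by simp [hne01', hne02']),
      Finset.card_insert_of_notMem (by simp [hne12']), Finset.card_singleton]
  · intro W hW W' hW' hWW'
    simp only [Finset.mem_insert, Finset.mem_singleton] at hW hW'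
    rcases hW with rfl | rfl | rfl <;> rcases hW' with rfl | rfl | rfl <;>
      first
        | exact absurd rfl hWW'
        | exact inf_comm _ _
        | rfl
        | exact e20
        | exact e21
        | exact (inf_comm _ _).trans e20
        | exact (inf_comm _ _).trans e21
  · have hsup : ({ρ ⟨0, h0⟩, ρ ⟨1, h1⟩, ρ ⟨2, h2n⟩} : Finset (Submodule F V)).sup id
        = pspan ρ 3 := by
      rw [pspan_three ρ hn]
      simp only [Finset.sup_insert, Finset.sup_singleton, id]
      rw [sup_assoc]
    rw [hsup]
    have r1 : finrank F ↥(pspan ρ 1) = k := by rw [pspan_one ρ h0]; exact hdim ⟨0, h0⟩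
    have r2 : finrank F ↥(pspan ρ 2) = k + t1 := by
      have h := finrank_pspan_succ_delta ρ 1
      rw [(rfl : delta ρ (1 + 1) = delta ρ 2), hδ2] at h
      norm_num at h
      rw [h, r1]
    have r3 : finrank F ↥(pspan ρ 3) = k + t1 + t1 := by
      have h := finrank_pspan_succ_delta ρ 2
      rw [(rfl : delta ρ (2 + 1) = delta ρ 3), hδ3] at h
      norm_num at h
      rw [h, r2]
    rw [r3, Nat.sub_sub_self h3.le]
    omega

lemma forward_dir {n k t1 t2 : ℕ} (h2 : t2 < t1) (h3 : t1 < k) (hn : 3 ≤ n)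
    {π : Fin n → Submodule F V} (hS : IsSPID k {k - t1, k - t2} π)
    (hspan : finrank F ↥(⨆ i, π i) = k + (n - 1) * (t1 - 1) + 1)
    (hNS : ¬ ∃ p, 3 ≤ p ∧ HasMaxSunflower k (k - t1) p (Set.range π))
    (ρ : Fin n → Submodule F V) (hinj : Function.Injective ρ)
    (hrange : Set.range ρ = Set.range π)
    (hmono : ∀ j, 2 ≤ j → j < n → delta ρ (j + 1) ≤ delta ρ j) :
    delta ρ 1 = k ∧ delta ρ 2 = t1 ∧ ∀ j, 3 ≤ j → j ≤ n → delta ρ j = t1 - 1 := by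
  obtain ⟨hπinj, hπdim, hπpair, -⟩ := hS
  obtain ⟨σ, hσbij, hσ⟩ := range_to_perm hπinj hinj hrange
  have hdim : ∀ i, finrank F ↥(ρ i) = k := fun i => by rw [hσ i]; exact hπdim _
  have hpair : ∀ i j, i ≠ j → finrank F ↥(ρ i ⊓ ρ j) ∈ ({k - t1, k - t2} : Set ℕ) := by
    intro i j hij
    rw [hσ i, hσ j]
    exact hπpair _ _ (fun h => hij (hσbij.injective h))
  -- total sum of deltas
  have htot : ∑ j ∈ Finset.Icc 1 n, delta ρ j = k + (n - 1) * (t1 - 1) + 1 := by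
    rw [sum_delta, pspan_of_le ρ n le_rfl, iSup_eq_of_range_eq hrange, hspan]
  have hδ1 : delta ρ 1 = k := delta_one ρ (by omega) (hdim _)
  -- delta bound
  have hle : ∀ j, 2 ≤ j → j ≤ n → delta ρ j ≤ t1 := by
    intro j hj2 hjn
    obtain ⟨m, rfl⟩ : ∃ m, j = m + 1 := ⟨j - 1, by omega⟩
    exact delta_le_t1 h3 ρ hdim hpair h2 m (by omega) (by omega)
  -- monotonicity extended
  have hmono' : ∀ j1 j2, 2 ≤ j1 → j1 ≤ j2 → j2 ≤ n → delta ρ j2 ≤ delta ρ j1 := by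
    intro j1 j2 hj1 hj12 hj2n
    induction j2 with
    | zero => omega
    | succ m ih =>
      rcases Nat.lt_or_ge m n with hmn | hmn
      · rcases Nat.lt_or_ge (j1 : ℕ) (m + 1) with hlt | hge
        · exact le_trans (hmono m (by omega) (by omega)) (ih (by omega) (by omega))
        · have : j1 = m + 1 := by omega
          rw [this]
      · omega
  -- sum over Icc 2 n
  have hsplit1 : Finset.Icc 1 n = insert 1 (Finset.Icc 2 n) := by
    ext x; simp [Finset.mem_Icc, Finset.mem_insert]; omega
  have hsum2 : ∑ j ∈ Finset.Icc 2 n, delta ρ j = (n - 1) * (t1 - 1) + 1 := by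
    have h1n : (1 : ℕ) ∉ Finset.Icc 2 n := by simp
    rw [hsplit1, Finset.sum_insert h1n, hδ1] at htot
    -- k + S = k + (n-1)(t1-1) + 1
    omega
  have hcard2 : (Finset.Icc 2 n).card = n - 1 := by rw [Nat.card_Icc]; omega
  -- δ₂ = t1
  have hδ2 : delta ρ 2 = t1 := by
    by_contra hne
    have hδ2le : delta ρ 2 ≤ t1 - 1 := by
      have := hle 2 le_rfl (by omega); omega
    have hall : ∀ j ∈ Finset.Icc 2 n, delta ρ j ≤ t1 - 1 := by
      intro j hj
      simp only [Finset.mem_Icc] at hj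
      exact le_trans (hmono' 2 j le_rfl hj.1 hj.2) hδ2le
    have hb : ∑ j ∈ Finset.Icc 2 n, delta ρ j ≤ (n - 1) * (t1 - 1) := by
      calc ∑ j ∈ Finset.Icc 2 n, delta ρ j ≤ ∑ _j ∈ Finset.Icc 2 n, (t1 - 1) :=
            Finset.sum_le_sum hall
        _ = (n - 1) * (t1 - 1) := by rw [Finset.sum_const, hcard2, smul_eq_mul]
    omega
  refine ⟨hδ1, hδ2, ?_⟩
  -- δ₃ = t1 gives a sunflower: contradiction
  have hδ3 : delta ρ 3 ≠ t1 := by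
    intro hδ3
    exact hNS ⟨3, le_rfl, by
      rw [← hrange]
      exact sunflower_of_deltas h2 h3 hn ρ hinj hdim hpair hδ2 hδ3⟩
  have hδ3le : delta ρ 3 ≤ t1 - 1 := by have := hle 3 (by omega) hn; omega
  have hall3 : ∀ j ∈ Finset.Icc 3 n, delta ρ j ≤ t1 - 1 := by
    intro j hj
    simp only [Finset.mem_Icc] at hj
    exact le_trans (hmono' 3 j (by omega) hj.1 hj.2) hδ3le
  have hcard3 : (Finset.Icc 3 n).card = n - 2 := by rw [Nat.card_Icc]; omega
  have hsum3 : ∑ j ∈ Finset.Icc 3 n, delta ρ j = (n - 2) * (t1 - 1) := by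
    have h2n : (2 : ℕ) ∉ Finset.Icc 3 n := by simp
    have hsplit2 : Finset.Icc 2 n = insert 2 (Finset.Icc 3 n) := by
      ext x; simp [Finset.mem_Icc, Finset.mem_insert]; omega
    rw [hsplit2, Finset.sum_insert h2n, hδ2] at hsum2
    have hexp : (n - 1) * (t1 - 1) = (t1 - 1) + (n - 2) * (t1 - 1) := by
      have : n - 1 = 1 + (n - 2) := by omega
      rw [this, add_mul, one_mul]
    rw [hexp] at hsum2
    have ht1 : 1 ≤ t1 := by omega
    generalize (n - 2) * (t1 - 1) = M at *
    omega
  intro j hj3 hjn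
  by_contra hne
  have hlt : delta ρ j < t1 - 1 := by
    have := hall3 j (by simp [Finset.mem_Icc]; omega); omega
  have : ∑ i ∈ Finset.Icc 3 n, delta ρ i < ∑ _i ∈ Finset.Icc 3 n, (t1 - 1) :=
    Finset.sum_lt_sum hall3 ⟨j, by simp [Finset.mem_Icc]; omega, hlt⟩
  rw [Finset.sum_const, hcard3, smul_eq_mul] at this
  omega

lemma pspan_comp_swap {n : ℕ} (ρ : Fin n → Submodule F V) (u v : Fin n) (m : ℕ)
    (h : ((u : ℕ) < m ↔ (v : ℕ) < m)) :
    pspan (ρ ∘ Equiv.swap u v) m = pspan ρ m := by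
  have hswap : ∀ i : Fin n, (i : ℕ) < m → ((Equiv.swap u v i : ℕ) < m) := by
    intro i hi
    rcases eq_or_ne i u with rfl | hu
    · rw [Equiv.swap_apply_left]; exact h.mp hi
    rcases eq_or_ne i v with rfl | hv
    · rw [Equiv.swap_apply_right]; exact h.mpr hi
    · rw [Equiv.swap_apply_of_ne_of_ne hu hv]; exact hi
  apply pspan_congr
  · intro i hi
    exact ⟨Equiv.swap u v i, hswap i hi, rfl⟩
  · intro i hi
    refine ⟨Equiv.swap u v i, hswap i hi, ?_⟩
    simp [Function.comp]
  done

lemma swap_improves {n : ℕ} (ρ : Fin n → Submodule F V) (m : ℕ) (hm : m + 1 < n)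
    (hlt : delta ρ (m + 1) < delta ρ (m + 2)) :
    finrank F ↥(pspan ρ (m + 1)) <
      finrank F ↥(pspan (ρ ∘ Equiv.swap ⟨m, by omega⟩ ⟨m + 1, hm⟩) (m + 1)) := by
  set u : Fin n := ⟨m, by omega⟩
  set v : Fin n := ⟨m + 1, hm⟩
  set ρ' := ρ ∘ Equiv.swap u v with hρ'
  have h1 : pspan ρ' (m + 1) = pspan ρ m ⊔ ρ v := by
    rw [pspan_succ ρ' m (by omega)]
    have e1 : pspan ρ' m = pspan ρ m :=
      pspan_comp_swap ρ u v m (by simp [u, v])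
    have e2 : ρ' ⟨m, by omega⟩ = ρ v := by
      show ρ (Equiv.swap u v ⟨m, by omega⟩) = ρ v
      congr 1
      exact Equiv.swap_apply_left u v
    rw [e1, e2]
  have h2 : finrank F ↥(pspan ρ m ⊔ ρ v) + finrank F ↥(ρ v ⊓ pspan ρ m)
      = finrank F ↥(pspan ρ m) + finrank F ↥(ρ v) := by
    rw [inf_comm]
    exact Submodule.finrank_sup_add_finrank_inf_eq _ _
  have hS2 : delta ρ (m + 1 + 1) + finrank F ↥(ρ v ⊓ pspan ρ (m + 1)) = finrank F ↥(ρ v) :=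
    delta_succ_eq ρ (m + 1) hm
  have hmono : finrank F ↥(ρ v ⊓ pspan ρ m) ≤ finrank F ↥(ρ v ⊓ pspan ρ (m + 1)) :=
    Submodule.finrank_mono (inf_le_inf_left _ (pspan_mono ρ (by omega)))
  have hS1 : finrank F ↥(pspan ρ (m + 1)) = finrank F ↥(pspan ρ m) + delta ρ (m + 1) :=
    finrank_pspan_succ_delta ρ m
  have he : delta ρ (m + 1 + 1) = delta ρ (m + 2) := rfl
  rw [h1]
  omega

lemma exists_perm_three {n : ℕ} (hn : 3 ≤ n) (a b c : Fin n) (hab : a ≠ b) (hac : a ≠ c)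
    (hbc : b ≠ c) :
    ∃ σ : Equiv.Perm (Fin n), σ ⟨0, by omega⟩ = a ∧ σ ⟨1, by omega⟩ = b ∧ σ ⟨2, by omega⟩ = c := by
  classical
  set z0 : Fin n := ⟨0, by omega⟩
  set z1 : Fin n := ⟨1, by omega⟩
  set z2 : Fin n := ⟨2, by omega⟩
  have h01 : z0 ≠ z1 := by simp [z0, z1, Fin.ext_iff]
  have h02 : z0 ≠ z2 := by simp [z0, z2, Fin.ext_iff]
  have h12 : z1 ≠ z2 := by simp [z1, z2, Fin.ext_iff]
  set e1 : Equiv.Perm (Fin n) := Equiv.swap z0 a with he1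
  set b1 : Fin n := e1.symm b with hb1
  set σ2 : Equiv.Perm (Fin n) := e1 * Equiv.swap z1 b1 with hσ2
  have hσ2_0 : σ2 z0 = a := by
    have hb1ne : b1 ≠ z0 := by
      intro h
      apply hab
      have : e1 b1 = b := e1.apply_symm_apply b
      rw [h] at this
      rw [← this]
      exact (Equiv.swap_apply_left z0 a).symm
    show e1 (Equiv.swap z1 b1 z0) = a
    rw [Equiv.swap_apply_of_ne_of_ne h01 (Ne.symm hb1ne)]
    exact Equiv.swap_apply_left z0 a
  have hσ2_1 : σ2 z1 = b := by
    show e1 (Equiv.swap z1 b1 z1) = b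
    rw [Equiv.swap_apply_left]
    exact e1.apply_symm_apply b
  set c2 : Fin n := σ2.symm c with hc2
  set σ3 : Equiv.Perm (Fin n) := σ2 * Equiv.swap z2 c2 with hσ3
  have hc2_0 : c2 ≠ z0 := by
    intro h
    apply hac
    have : σ2 c2 = c := σ2.apply_symm_apply c
    rw [h, hσ2_0] at this
    exact this
  have hc2_1 : c2 ≠ z1 := by
    intro h
    apply hbc
    have : σ2 c2 = c := σ2.apply_symm_apply c
    rw [h, hσ2_1] at this
    exact this
  refine ⟨σ3, ?_, ?_, ?_⟩
  · show σ2 (Equiv.swap z2 c2 z0) = a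
    rw [Equiv.swap_apply_of_ne_of_ne h02 (Ne.symm hc2_0)]
    exact hσ2_0
  · show σ2 (Equiv.swap z2 c2 z1) = b
    rw [Equiv.swap_apply_of_ne_of_ne h12 (Ne.symm hc2_1)]
    exact hσ2_1
  · show σ2 (Equiv.swap z2 c2 z2) = c
    rw [Equiv.swap_apply_left]
    exact σ2.apply_symm_apply c

lemma sup_bound {k t1 : ℕ} (h3 : t1 ≤ k) (C : Submodule F V)
    (hC : finrank F ↥C = k - t1) (B : Finset (Submodule F V))
    (hB : ∀ W ∈ B, C ≤ W ∧ finrank F ↥W = k) :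
    ∀ U : Submodule F V, C ≤ U → finrank F ↥(U ⊔ B.sup id) ≤ finrank F ↥U + B.card * t1 := by
  classical
  induction B using Finset.induction_on with
  | empty => intro U _; rw [Finset.sup_empty, sup_bot_eq]; simp
  | insert x B hx ih =>
    intro U hCU
    have hBx : ∀ W ∈ B, C ≤ W ∧ finrank F ↥W = k := fun W hW => hB W (Finset.mem_insert_of_mem hW)
    have hxC : C ≤ x := (hB x (Finset.mem_insert_self x B)).1
    have hxk : finrank F ↥x = k := (hB x (Finset.mem_insert_self x B)).2
    have hstep : finrank F ↥(U ⊔ x) ≤ finrank F ↥U + t1 := by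
      have hid := Submodule.finrank_sup_add_finrank_inf_eq U x
      have hge : k - t1 ≤ finrank F ↥(U ⊓ x) := by
        rw [← hC]; exact Submodule.finrank_mono (le_inf hCU hxC)
      omega
    have hCUx : C ≤ U ⊔ x := le_trans hCU le_sup_left
    have := ih hBx (U ⊔ x) hCUx
    rw [Finset.sup_insert, ← sup_assoc]
    calc finrank F ↥(U ⊔ x ⊔ B.sup id) ≤ finrank F ↥(U ⊔ x) + B.card * t1 := this
      _ ≤ finrank F ↥U + t1 + B.card * t1 := by omega
      _ = finrank F ↥U + (insert x B).card * t1 := by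
          rw [Finset.card_insert_of_notMem hx, add_mul, one_mul]; ring

set_option maxHeartbeats 2000000 in
lemma backward_dir {n k t1 t2 : ℕ} (h1 : 2 ≤ t2) (h2 : t2 < t1) (h3 : t1 < k) (hn : 3 ≤ n)
    {π : Fin n → Submodule F V} (hS : IsSPID k {k - t1, k - t2} π)
    {p : ℕ} (hp : 3 ≤ p) (hMS : HasMaxSunflower k (k - t1) p (Set.range π))
    (hR : ∀ ρ : Fin n → Submodule F V, Function.Injective ρ →
        Set.range ρ = Set.range π →
        (∀ j, 2 ≤ j → j < n → delta ρ (j + 1) ≤ delta ρ j) →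
        delta ρ 1 = k ∧ delta ρ 2 = t1 ∧ ∀ j, 3 ≤ j → j ≤ n → delta ρ j = t1 - 1) :
    False := by
  classical
  obtain ⟨hπinj, hπdim, hπpair, -⟩ := hS
  obtain ⟨A, hAsub, hAcard, C, hCrank, hCint, hCdim⟩ := hMS
  -- three distinct members of A
  have hA1 : 1 < A.card := by omega
  obtain ⟨W1, hW1⟩ := Finset.card_pos.mp (by omega : 0 < A.card)
  obtain ⟨W2, hW2, hW21⟩ := Finset.exists_mem_ne hA1 W1
  have hAe : 1 < (A.erase W1).card := by rw [Finset.card_erase_of_mem hW1]; omega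
  obtain ⟨W3, hW3e, hW32⟩ := Finset.exists_mem_ne hAe W2
  obtain ⟨hW31, hW3⟩ := Finset.mem_erase.mp hW3e
  -- the center is inside every member
  have hCle : ∀ W ∈ A, C ≤ W := by
    intro W hW
    obtain ⟨W', hW', hne⟩ := Finset.exists_mem_ne hA1 W
    rw [← hCint W hW W' hW' (Ne.symm hne)]
    exact inf_le_left
  have hdimA : ∀ W ∈ A, finrank F ↥W = k := by
    intro W hW
    obtain ⟨i, hi⟩ := hAsub (Finset.mem_coe.mpr hW)
    rw [← hi]; exact hπdim i
  -- indices
  obtain ⟨a, ha⟩ := hAsub (Finset.mem_coe.mpr hW1)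
  obtain ⟨b, hb⟩ := hAsub (Finset.mem_coe.mpr hW2)
  obtain ⟨c, hc⟩ := hAsub (Finset.mem_coe.mpr hW3)
  have hab : a ≠ b := fun h => hW21 (by rw [← ha, ← hb, h])
  have hac : a ≠ c := fun h => hW31 (by rw [← ha, ← hc, h])
  have hbc : b ≠ c := fun h => hW32 (by rw [← hb, ← hc, h])
  obtain ⟨σ0, hσ00, hσ01, hσ02⟩ := exists_perm_three hn a b c hab hac hbc
  -- the finite set of admissible orderings
  set T : Finset (Equiv.Perm (Fin n)) := Finset.univ.filter
    (fun σ => σ ⟨0, by omega⟩ = a ∧ σ ⟨1, by omega⟩ = b ∧ σ ⟨2, by omega⟩ = c) with hT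
  have hσ0T : σ0 ∈ T := by
    rw [hT, Finset.mem_filter]
    exact ⟨Finset.mem_univ _, hσ00, hσ01, hσ02⟩
  set g : Equiv.Perm (Fin n) → ℕ :=
    fun σ => ∑ m ∈ Finset.range (n + 1), finrank F ↥(pspan (π ∘ ⇑σ) m) with hg
  obtain ⟨σ, hσT, hσmax⟩ := T.exists_max_image g ⟨σ0, hσ0T⟩
  obtain ⟨-, hm0, hm1, hm2⟩ := Finset.mem_filter.mp hσT
  set ρ : Fin n → Submodule F V := π ∘ ⇑σ with hρdef
  have hinj : Function.Injective ρ := hπinj.comp σ.injective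
  have hrange : Set.range ρ = Set.range π := σ.surjective.range_comp π
  have hdim : ∀ i, finrank F ↥(ρ i) = k := fun i => hπdim _
  have hpair : ∀ i j, i ≠ j → finrank F ↥(ρ i ⊓ ρ j) ∈ ({k - t1, k - t2} : Set ℕ) :=
    fun i j hij => hπpair _ _ fun h => hij (σ.injective h)
  have hρ0 : ∀ h : (0:ℕ) < n, ρ ⟨0, h⟩ = W1 := fun h => by
    show π (σ ⟨0, h⟩) = W1; rw [show (⟨0, h⟩ : Fin n) = ⟨0, by omega⟩ from rfl, hm0, ha]
  have hρ1 : ∀ h : (1:ℕ) < n, ρ ⟨1, h⟩ = W2 := fun h => by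
    show π (σ ⟨1, h⟩) = W2; rw [show (⟨1, h⟩ : Fin n) = ⟨1, by omega⟩ from rfl, hm1, hb]
  have hρ2 : ∀ h : (2:ℕ) < n, ρ ⟨2, h⟩ = W3 := fun h => by
    show π (σ ⟨2, h⟩) = W3; rw [show (⟨2, h⟩ : Fin n) = ⟨2, by omega⟩ from rfl, hm2, hc]
  -- rank computations
  have hW12 : W1 ⊓ W2 = C := hCint W1 hW1 W2 hW2 (Ne.symm hW21)
  have r2' : finrank F ↥(W1 ⊔ W2) = k + t1 := by
    have hid := Submodule.finrank_sup_add_finrank_inf_eq W1 W2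
    rw [hW12, hCrank, hdimA W1 hW1, hdimA W2 hW2] at hid
    omega
  have r1 : finrank F ↥(pspan ρ 1) = k := by
    rw [pspan_one ρ (by omega), hρ0 (by omega), hdimA W1 hW1]
  have r2 : finrank F ↥(pspan ρ 2) = k + t1 := by
    rw [pspan_two ρ (by omega), hρ0 (by omega), hρ1 (by omega), r2']
  -- the crucial rank of the triple join, via maximality of the sunflower
  have r3' : finrank F ↥(W1 ⊔ W2 ⊔ W3) = k + t1 + t1 := by
    set s3 : Finset (Submodule F V) := {W1, W2, W3} with hs3
    have hsub3 : s3 ⊆ A := by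
      intro x hx
      simp only [hs3, Finset.mem_insert, Finset.mem_singleton] at hx
      rcases hx with rfl | rfl | rfl <;> assumption
    have hcard3 : s3.card = 3 := by
      rw [hs3, Finset.card_insert_of_notMem (by simp [Ne.symm hW21, Ne.symm hW31]),
        Finset.card_insert_of_notMem (by simp [Ne.symm hW32]), Finset.card_singleton]
    have hsup3 : s3.sup id = W1 ⊔ W2 ⊔ W3 := by
      rw [hs3]
      simp only [Finset.sup_insert, Finset.sup_singleton, id]
      rw [sup_assoc]
    have hAsup : A.sup id = (W1 ⊔ W2 ⊔ W3) ⊔ (A \ s3).sup id := by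
      rw [← hsup3, sup_comm, ← Finset.sup_union, Finset.sdiff_union_of_subset hsub3]
    have hqcard : (A \ s3).card = p - 3 := by
      rw [Finset.card_sdiff_of_subset hsub3, hAcard, hcard3]
    have hBle := sup_bound h3.le C hCrank (A \ s3)
      (fun W hW => ⟨hCle W (Finset.mem_sdiff.mp hW).1, hdimA W (Finset.mem_sdiff.mp hW).1⟩)
      (W1 ⊔ W2 ⊔ W3) (le_trans (hCle W1 hW1) (le_sup_of_le_left le_sup_left))
    rw [← hAsup, hqcard] at hBle
    rw [hCdim, Nat.sub_sub_self h3.le] at hBle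
    -- identity for the triple
    have hid := Submodule.finrank_sup_add_finrank_inf_eq (W1 ⊔ W2) W3
    rw [r2', hdimA W3 hW3] at hid
    have hdge : k - t1 ≤ finrank F ↥((W1 ⊔ W2) ⊓ W3) := by
      rw [← hCrank]
      exact Submodule.finrank_mono (le_inf (le_trans (hCle W1 hW1) le_sup_left) (hCle W3 hW3))
    have hpt : p * t1 = (p - 3) * t1 + 3 * t1 := by
      rw [← add_mul]
      congr 1
      omega
    rw [hpt] at hBle
    generalize (p - 3) * t1 = M at hBle
    omega
  have r3 : finrank F ↥(pspan ρ 3) = k + t1 + t1 := by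
    rw [pspan_three ρ hn, hρ0 (by omega), hρ1 (by omega), hρ2 (by omega), r3']
  have hδ2 : delta ρ 2 = t1 := by
    have e : delta ρ 2 = finrank F ↥(pspan ρ 2) - finrank F ↥(pspan ρ 1) := rfl
    rw [e, r2, r1]; omega
  have hδ3 : delta ρ 3 = t1 := by
    have e : delta ρ 3 = finrank F ↥(pspan ρ 3) - finrank F ↥(pspan ρ 2) := rfl
    rw [e, r3, r2]; omega
  -- the chosen ordering is non-increasing
  have hmono : ∀ j, 2 ≤ j → j < n → delta ρ (j + 1) ≤ delta ρ j := by
    intro j hj2 hjn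
    rcases eq_or_ne j 2 with rfl | hj2'
    · show delta ρ 3 ≤ delta ρ 2
      rw [hδ2, hδ3]
    rcases eq_or_ne j 3 with rfl | hj3'
    · rw [hδ3]
      exact delta_le_t1 h3 ρ hdim hpair h2 3 (by omega) hjn
    -- j ≥ 4 : the exchange argument
    by_contra hcon
    push_neg at hcon
    obtain ⟨m, rfl⟩ : ∃ m, j = m + 1 := ⟨j - 1, by omega⟩
    have hm3 : 3 ≤ m := by omega
    have hm1n : m + 1 < n := hjn
    set u : Fin n := ⟨m, by omega⟩ with hu
    set v : Fin n := ⟨m + 1, hm1n⟩ with hv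
    have himp := swap_improves ρ m hm1n (by exact hcon)
    set σ' : Equiv.Perm (Fin n) := σ * Equiv.swap u v with hσ'
    have hcomp : (π ∘ ⇑σ') = ρ ∘ ⇑(Equiv.swap u v) := rfl
    have hσ'T : σ' ∈ T := by
      rw [hT, Finset.mem_filter]
      refine ⟨Finset.mem_univ _, ?_, ?_, ?_⟩
      · show σ (Equiv.swap u v ⟨0, by omega⟩) = a
        rw [Equiv.swap_apply_of_ne_of_ne (by simp only [hu, ne_eq, Fin.mk.injEq]; omega)
          (by simp only [hv, ne_eq, Fin.mk.injEq]; omega)]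
        exact hm0
      · show σ (Equiv.swap u v ⟨1, by omega⟩) = b
        rw [Equiv.swap_apply_of_ne_of_ne (by simp only [hu, ne_eq, Fin.mk.injEq]; omega)
          (by simp only [hv, ne_eq, Fin.mk.injEq]; omega)]
        exact hm1
      · show σ (Equiv.swap u v ⟨2, by omega⟩) = c
        rw [Equiv.swap_apply_of_ne_of_ne (by simp only [hu, ne_eq, Fin.mk.injEq]; omega)
          (by simp only [hv, ne_eq, Fin.mk.injEq]; omega)]
        exact hm2
    have hgt : g σ < g σ' := by
      rw [hg]
      apply Finset.sum_lt_sum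
      · intro x hx
        rcases eq_or_ne x (m + 1) with rfl | hxm
        · rw [hcomp]
          exact le_of_lt himp
        · rw [hcomp, pspan_comp_swap ρ u v x (by simp [hu, hv]; omega)]
      · refine ⟨m + 1, Finset.mem_range.mpr (by omega), ?_⟩
        rw [hcomp]
        exact himp
    exact absurd (hσmax σ' hσ'T) (not_le.mpr hgt)
  obtain ⟨-, -, hlast⟩ := hR ρ hinj hrange hmono
  have := hlast 3 le_rfl hn
  omega

/-- Proposition 2.3 (first part): `S` contains no `(k-t₁)`-sunflower of maximal dimension
with at least three petals iff every non-increasing ordering of `S` has array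
`δ(S) = (k, t₁, t₁-1, …, t₁-1)`. -/
theorem statement7 {n k t1 t2 : ℕ} (h1 : 2 ≤ t2) (h2 : t2 < t1) (h3 : t1 < k)
    (hn : 3 ≤ n) (π : Fin n → Submodule F V) (hS : IsSPID k {k - t1, k - t2} π)
    (hdimV : n * t1 + (k - t1) ≤ finrank F V)
    (hspan : finrank F ↥(⨆ i, π i) = k + (n - 1) * (t1 - 1) + 1) :
    (¬ ∃ p, 3 ≤ p ∧ HasMaxSunflower k (k - t1) p (Set.range π)) ↔
      ∀ ρ : Fin n → Submodule F V, Function.Injective ρ →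
        Set.range ρ = Set.range π →
        (∀ j, 2 ≤ j → j < n → delta ρ (j + 1) ≤ delta ρ j) →
        delta ρ 1 = k ∧ delta ρ 2 = t1 ∧ ∀ j, 3 ≤ j → j ≤ n → delta ρ j = t1 - 1 := by
  constructor
  · intro hNS ρ hinj hrange hmono
    exact forward_dir h2 h3 hn hS hspan hNS ρ hinj hrange hmono
  · rintro hR ⟨p, hp, hMS⟩
    exact backward_dir h1 h2 h3 hn hS hp hMS hR
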